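/- With the same setup: for any function f : {i ∈ ℤ : i ≥ 2} → ℤ/2ℤ that is not identically zero, there exists h ∈ Z (the set defined by Z = ⋃_{k≥2} ⋂_{m≥0} (τ^{-1}_*)^m(C_{k+m})) such that h(i) = f(i) for all i ≥ 2. -/
import Mathlib

/-- The map `τ¹_*` on functions `ℤ* → ℤ/2ℤ` (encoded as functions on `ℤ` whose value at
`0` is irrelevant and set to `0`). -/
def tau1 (h : ℤ → ZMod 2) : ℤ → ZMod 2 := fun i =>
  if i < -2 then h (-i) + h (i - 1) + h i + h (i + 1)
  else if i = -2 then h (-i) + h (-2) + h (-3)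
  else if i = -1 then h (-i) + h (-2)
  else if i = 0 then 0
  else h (-i)

/-- The map `τ⁻¹_*` on functions `ℤ* → ℤ/2ℤ`. -/
def tauNeg1 (h : ℤ → ZMod 2) : ℤ → ZMod 2 := fun i =>
  if i < 0 then h (-i)
  else if i = 0 then 0
  else if i = 1 then h (-i) + h 2
  else if i = 2 then h (-i) + h 2 + h 3
  else h (-i) + h (i - 1) + h i + h (i + 1)

/-- The cylinder set `C_k = {h : h(k) = h(-k-1) = 1, h(i) = 0 for -k-1 < i < k, i ≠ 0}`. -/
def Cyl (k : ℤ) : Set (ℤ → ZMod 2) :=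
  {h | h k = 1 ∧ h (-k - 1) = 1 ∧ ∀ i : ℤ, -k - 1 < i → i < k → i ≠ 0 → h i = 0}

/-- `HasProx h k` says the proximity `P(h) = min {|i| : h(i) ≠ 0}` equals `k`. -/
def HasProx (h : ℤ → ZMod 2) (k : ℤ) : Prop :=
  (h k ≠ 0 ∨ h (-k) ≠ 0) ∧ ∀ i : ℤ, i ≠ 0 → |i| < k → h i = 0

/-- `Z = ⋃_{k ≥ 2} ⋂_{m ≥ 0} (τ⁻¹_*)^m(C_{k+m})`. -/
def Zset : Set (ℤ → ZMod 2) :=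
  {h | ∃ k : ℤ, 2 ≤ k ∧ ∀ m : ℕ, tau1^[m] h ∈ Cyl (k + m)}

/- Auxiliary construction: the array of values of the iterates, in skew coordinates. -/

def colF (g : ℕ → ZMod 2) : ℕ → ℕ → ZMod 2
  | 0, _ => 1
  | 1, r => g 1 + (r : ZMod 2)
  | (c+2), 0 => g (c+2)
  | (c+2), (r+1) => colF g c (r+2) + colF g (c+2) r + colF g c (r+1) + colF g (c+1) (r+1)
termination_by c r => (c, r)

def BF (g : ℕ → ZMod 2) (m : ℕ) (j : ℤ) : ZMod 2 :=
  if j < 0 then 0 else colF g j.toNat m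

lemma BF_neg (g : ℕ → ZMod 2) (m : ℕ) {j : ℤ} (hj : j < 0) : BF g m j = 0 :=
  if_pos hj

lemma BF_zero (g : ℕ → ZMod 2) (m : ℕ) : BF g m 0 = 1 := by
  simp [BF, colF]

lemma BF_one (g : ℕ → ZMod 2) (m : ℕ) : BF g m 1 = g 1 + (m : ZMod 2) := by
  simp [BF, colF]

lemma colF_row_zero (g : ℕ → ZMod 2) (hg0 : g 0 = 1) : ∀ c : ℕ, colF g c 0 = g c
  | 0 => by simp [colF, hg0]
  | 1 => by simp [colF]
  | (c+2) => by rw [colF]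

lemma BF_row_zero (g : ℕ → ZMod 2) (hg0 : g 0 = 1) {j : ℤ} (hj : 0 ≤ j) :
    BF g 0 j = g j.toNat := by
  rw [BF, if_neg (not_lt.2 hj)]
  exact colF_row_zero g hg0 j.toNat

lemma Brec (g : ℕ → ZMod 2) (m : ℕ) (j : ℤ) :
    BF g m (j+2) + BF g (m+1) (j+2) + BF g (m+1) (j+1) + BF g (m+1) j = BF g (m+2) j := by
  rcases le_or_gt 0 j with hj | hj
  · obtain ⟨c, rfl⟩ : ∃ c : ℕ, j = (c : ℤ) := ⟨j.toNat, (Int.toNat_of_nonneg hj).symm⟩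
    have key : colF g (c+2) (m+1)
        = colF g c (m+2) + colF g (c+2) m + colF g c (m+1) + colF g (c+1) (m+1) := by
      rw [colF]
    have e2 : ((c : ℤ) + 2).toNat = c + 2 := by omega
    have e1 : ((c : ℤ) + 1).toNat = c + 1 := by omega
    have e0 : ((c : ℤ)).toNat = c := by omega
    simp only [BF, if_neg (by omega : ¬ (c:ℤ)+2 < 0), if_neg (by omega : ¬ (c:ℤ)+1 < 0),
      if_neg (by omega : ¬ (c:ℤ) < 0), e2, e1, e0]
    have fact : ∀ a x1 x2 x3 X : ZMod 2, X = a + x1 + x3 + x2 → x1 + X + x2 + x3 = a := by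
      decide
    exact fact _ _ _ _ _ key
  · by_cases h1 : j = -1
    · subst h1
      rw [show (-1:ℤ)+2 = 1 by norm_num, show (-1:ℤ)+1 = 0 by norm_num]
      rw [BF_one, BF_one, BF_zero, BF_neg g (m+1) (show (-1:ℤ) < 0 by norm_num),
        BF_neg g (m+2) (show (-1:ℤ) < 0 by norm_num)]
      push_cast
      have fact : ∀ a b : ZMod 2, (a + b) + (a + (b+1)) + 1 + 0 = 0 := by decide
      exact fact _ _
    · by_cases h2 : j = -2
      · subst h2
        rw [show (-2:ℤ)+2 = 0 by norm_num, show (-2:ℤ)+1 = -1 by norm_num]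
        rw [BF_zero, BF_zero, BF_neg g (m+1) (show (-1:ℤ) < 0 by norm_num),
          BF_neg g (m+1) (show (-2:ℤ) < 0 by norm_num),
          BF_neg g (m+2) (show (-2:ℤ) < 0 by norm_num)]
        decide
      · rw [BF_neg g m (by omega), BF_neg g (m+1) (by omega), BF_neg g (m+1) (by omega),
          BF_neg g (m+1) (by omega), BF_neg g (m+2) (by omega)]
        decide

/-- The `m`-th iterate of the function we construct. -/
def GF (g : ℕ → ZMod 2) (k : ℤ) (m : ℕ) : ℤ → ZMod 2 := fun i =>
  if 0 < i then BF g m (i - k - m)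
  else if i = 0 then 0
  else BF g (m+1) (-i - k - m - 1)

lemma tau1_GF (g : ℕ → ZMod 2) (k : ℤ) (hk : 2 ≤ k) (m : ℕ) :
    tau1 (GF g k m) = GF g k (m+1) := by
  funext i
  simp only [tau1, GF]
  push_cast
  by_cases h1 : i < -2
  · rw [if_pos h1]
    rw [if_pos (by omega : (0:ℤ) < -i), if_neg (by omega : ¬ (0:ℤ) < i - 1),
      if_neg (by omega : ¬ i - 1 = 0), if_neg (by omega : ¬ (0:ℤ) < i),
      if_neg (by omega : ¬ i = 0), if_neg (by omega : ¬ (0:ℤ) < i + 1),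
      if_neg (by omega : ¬ i + 1 = 0), if_neg (by omega : ¬ (0:ℤ) < i),
      if_neg (by omega : ¬ i = 0)]
    have H := Brec g m (-i - k - (m:ℤ) - 2)
    ring_nf at H ⊢
    exact H
  · rw [if_neg h1]
    by_cases h2 : i = -2
    · rw [if_pos h2]; subst h2
      norm_num
      by_cases hkm : k + (m:ℤ) = 2
      · rw [show (2:ℤ) - k - ↑m = 0 by omega, show (0:ℤ) - 1 = -1 by norm_num,
          show (3:ℤ) - k - ↑m - 1 = 0 by omega,
          show (2:ℤ) - k - (↑m+1) - 1 = -2 by omega, BF_zero, BF_zero,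
          BF_neg g (m+1) (show (-1:ℤ) < 0 by norm_num),
          BF_neg g (m+1+1) (show (-2:ℤ) < 0 by norm_num)]
        decide
      · rw [BF_neg g m (by omega), BF_neg g (m+1) (by omega), BF_neg g (m+1) (by omega),
          BF_neg g (m+1+1) (by omega)]
        decide
    · rw [if_neg h2]
      by_cases h3 : i = -1
      · rw [if_pos h3]; subst h3
        norm_num
        rw [BF_neg g m (by omega), BF_neg g (m+1) (by omega), BF_neg g (m+1+1) (by omega)]
        decide
      · rw [if_neg h3]
        by_cases h4 : i = 0
        · subst h4
          norm_num
        · rw [if_neg h4]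
          rw [if_neg (by omega : ¬ (0:ℤ) < -i), if_neg (by omega : ¬ -i = 0),
            if_pos (by omega : (0:ℤ) < i)]
          ring_nf

lemma GF_iter (g : ℕ → ZMod 2) (k : ℤ) (hk : 2 ≤ k) (m : ℕ) :
    tau1^[m] (GF g k 0) = GF g k m := by
  induction m with
  | zero => rfl
  | succ n ih => rw [Function.iterate_succ_apply', ih, tau1_GF g k hk n]

/-- For any function `f` on `{i ∈ ℤ : i ≥ 2}` with values in `ℤ/2ℤ` which is not
identically zero, there exists `h ∈ Z` with `h(i) = f(i)` for all `i ≥ 2`. -/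
theorem stmt16 (f : ℤ → ZMod 2) (hf : ∃ i : ℤ, 2 ≤ i ∧ f i ≠ 0) :
    ∃ h ∈ Zset, ∀ i : ℤ, 2 ≤ i → h i = f i := by
  classical
  have hf' : ∃ n : ℕ, f (2 + n) ≠ 0 := by
    obtain ⟨i, hi2, hi⟩ := hf
    exact ⟨(i-2).toNat, by rwa [show (2:ℤ) + ((i-2).toNat:ℤ) = i by omega]⟩
  set N := Nat.find hf' with hN
  set k : ℤ := 2 + (N:ℤ) with hkdef
  have hk : 2 ≤ k := by rw [hkdef]; omega
  have hfk : f k ≠ 0 := by rw [hkdef]; exact Nat.find_spec hf'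
  have hmin : ∀ i : ℤ, 2 ≤ i → i < k → f i = 0 := by
    intro i h2 hik
    have hlt : (i-2).toNat < N := by omega
    have := Nat.find_min hf' hlt
    simp only [not_not] at this
    rwa [show (2:ℤ) + ((i-2).toNat:ℤ) = i by omega] at this
  set g : ℕ → ZMod 2 := fun c => f (k + c) with hg
  have hg0 : g 0 = 1 := by
    have h2 : ∀ a : ZMod 2, a ≠ 0 → a = 1 := by decide
    simpa [hg] using h2 _ hfk
  refine ⟨GF g k 0, ⟨k, hk, ?_⟩, ?_⟩
  · intro m
    rw [GF_iter g k hk m]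
    refine ⟨?_, ?_, ?_⟩
    · show GF g k m (k + m) = 1
      simp only [GF]
      rw [if_pos (by omega : (0:ℤ) < k + m), show k + (m:ℤ) - k - m = 0 by ring, BF_zero]
    · show GF g k m (-(k + m) - 1) = 1
      simp only [GF]
      rw [if_neg (by omega : ¬ (0:ℤ) < -(k + m) - 1), if_neg (by omega : ¬ -(k + (m:ℤ)) - 1 = 0),
        show -(-(k + (m:ℤ)) - 1) - k - m - 1 = 0 by ring, BF_zero]
    · intro i hlow hhigh hne
      simp only [GF]
      by_cases hpos : 0 < i
      · rw [if_pos hpos, BF_neg g m (by omega)]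
      · rw [if_neg hpos, if_neg hne, BF_neg g (m+1) (by omega)]
  · intro i hi
    simp only [GF]
    rw [if_pos (by omega : (0:ℤ) < i)]
    rw [show i - k - ((0:ℕ):ℤ) = i - k by push_cast; ring]
    rcases lt_or_ge i k with hik | hik
    · rw [BF_neg g 0 (show i - k < 0 by omega), hmin i hi hik]
    · rw [BF_row_zero g hg0 (by omega : (0:ℤ) ≤ i - k)]
      rw [hg]
      show f (k + ((i - k).toNat : ℤ)) = f i
      congr 1
      omega
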